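/- The folding dynamics G is strongly transitive on the phase space X = 𝔠_N × ⟦−N,N⟧^ℕ: for all points X_A, X_B ∈ X and every r > 0, there exist a point X ∈ X with d(X, X_A) ≤ r and an integer n ∈ ℕ such that G^n(X) = X_B. -/

import Mathlib

open scoped BigOperators

namespace HP

/-- A conformation of `N+1` residues in absolute encoding
(the initial residue, always `0`, is omitted): `C k` is the paper's `C_{k+1}`. -/
abbrev Conf (N : ℕ) := Fin N → ZMod 4

open Classical in
/-- `δ(a,b) = 0` if `a = b`, `1` otherwise. -/
noncomputable def delta {α : Type*} (a b : α) : ℝ := if a = b then 0 else 1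

/-- `d_C(C,Č) = Σ_{k=1}^N δ(C_k,Č_k)·2^{N−k}`. -/
noncomputable def dC (N : ℕ) (C C' : Conf N) : ℝ :=
  ∑ k : Fin N, delta (C k) (C' k) * (2 : ℝ) ^ (N - 1 - (k : ℕ))

/-- `d_F(F,F̌) = (9/(2N))·Σ_{k=0}^∞ |F^k − F̌^k|/10^{k+1}`. -/
noncomputable def dF (N : ℕ) (F F' : ℕ → ℤ) : ℝ :=
  (9 / (2 * (N : ℝ))) * ∑' k : ℕ, |((F k : ℝ)) - ((F' k : ℝ))| / 10 ^ (k + 1)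

/-- `d((C,F),(Č,F̌)) = d_C(C,Č) + d_F(F,F̌)`. -/
noncomputable def distX (N : ℕ) (X Y : Conf N × (ℕ → ℤ)) : ℝ :=
  dC N X.1 Y.1 + dF N X.2 Y.2

/-- A folding sequence takes values in `⟦−N,N⟧`. -/
def validSeq (N : ℕ) (F : ℕ → ℤ) : Prop := ∀ k, |F k| ≤ (N : ℤ)

/-- The fold map `f_k`: residues with (paper) index `≥ |k|` are rotated by
`f^{sign k}` where `f x = x + 1` (in `ℤ/4ℤ`); `f_0 = id`. -/
def foldMap (N : ℕ) (k : ℤ) (C : Conf N) : Conf N :=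
  fun j => if ((j : ℕ) : ℤ) + 1 < |k| then C j else C j + (Int.sign k : ZMod 4)

/-- The folding dynamics `G(C,F) = (f_{i(F)}(C), σ(F))`. -/
def G (N : ℕ) : Conf N × (ℕ → ℤ) → Conf N × (ℕ → ℤ) :=
  fun X => (foldMap N (X.2 0) X.1, fun n => X.2 (n + 1))

/-- The shift `σ` on folding sequences. -/
def shiftF (F : ℕ → ℤ) : ℕ → ℤ := fun k => F (k + 1)

/-- Unit move in the 2D lattice associated with an absolute encoding letter. -/
def step (c : ZMod 4) : ℤ × ℤ :=
  if c = 0 then (1, 0) else if c = 1 then (0, -1) else if c = 2 then (-1, 0) else (0, 1)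

/-- `pos N C i` is the lattice point `X_i` of the 2D representation `p(C)`. -/
def pos (N : ℕ) (C : Conf N) : ℕ → ℤ × ℤ
  | 0 => (0, 0)
  | i + 1 => pos N C i + (if h : i < N then step (C ⟨i, h⟩) else 0)

/-- The SAW requirement: the lattice points `X_0, …, X_N` are pairwise distinct. -/
def SAW (N : ℕ) (C : Conf N) : Prop :=
  ∀ i j : ℕ, i ≤ N → j ≤ N → pos N C i = pos N C j → i = j

/-- Successive application of fold maps `f_{k_1}, …, f_{k_n}`. -/
def folds (N : ℕ) : Conf N → List ℤ → Conf N
  | C, [] => C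
  | C, k :: t => folds N (foldMap N k C) t

/-- The set `𝔠_N` of acceptable conformations: obtained from `(0,…,0)` by a
nonempty sequence of folds in `⟦−N,N⟧`, all intermediate conformations
(including the initial and final ones) satisfying the SAW requirement. -/
def acceptable (N : ℕ) (C : Conf N) : Prop :=
  ∃ L : List ℤ, L ≠ [] ∧ (∀ k ∈ L, |k| ≤ (N : ℤ)) ∧
    folds N (fun _ => 0) L = C ∧
    ∀ p : List ℤ, p <+: L → SAW N (folds N (fun _ => 0) p)

/-- Membership in the phase space `X = 𝔠_N × ⟦−N,N⟧^ℕ`. -/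
def inX (N : ℕ) (X : Conf N × (ℕ → ℤ)) : Prop :=
  acceptable N X.1 ∧ validSeq N X.2

/-- `U` is open in the metric space `(X, d)` (relative topology on `𝔠_N × ⟦−N,N⟧^ℕ`). -/
def openIn (N : ℕ) (U : Set (Conf N × (ℕ → ℤ))) : Prop :=
  ∀ x ∈ U, ∃ ε > (0 : ℝ), ∀ y, inX N y → distX N x y < ε → y ∈ U

/-- `A` is closed in the metric space `(X, d)` (relative topology). -/
def closedIn (N : ℕ) (A : Set (Conf N × (ℕ → ℤ))) : Prop :=
  ∀ x, inX N x → x ∉ A → ∃ ε > (0 : ℝ), ∀ y, inX N y → distX N x y < ε → y ∉ A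

lemma folds_append (N : ℕ) (C : Conf N) (L₁ L₂ : List ℤ) :
    folds N C (L₁ ++ L₂) = folds N (folds N C L₁) L₂ := by
  induction L₁ generalizing C with
  | nil => rfl
  | cons k t ih => simp only [List.cons_append, folds]; exact ih _

lemma folds_replicate (N t : ℕ) (k : ℤ) (D : Conf N) :
    folds N D (List.replicate t k)
      = fun j : Fin N => if ((j : ℕ) : ℤ) + 1 < |k| then D j else D j + (t : ZMod 4) * (Int.sign k : ZMod 4) := by
  induction t generalizing D with
  | zero => funext j; simp [folds]
  | succ t ih =>
    funext j
    rw [List.replicate_succ]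
    show folds N (foldMap N k D) (List.replicate t k) j = _
    rw [ih]
    simp only [foldMap]
    by_cases h : ((j : ℕ) : ℤ) + 1 < |k|
    · simp [h]
    · simp only [h, if_false]
      push_cast
      ring

lemma exists_connect (N : ℕ) (D E : Conf N) :
    ∃ L : List ℤ, (∀ k ∈ L, |k| ≤ (N : ℤ)) ∧ folds N D L = E := by
  suffices H : ∀ t : ℕ, ∀ D : Conf N, (∀ j : Fin N, (j : ℕ) < N - t → D j = E j) →
      ∃ L : List ℤ, (∀ k ∈ L, |k| ≤ (N : ℤ)) ∧ folds N D L = E by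
    exact H N D (fun j hj => absurd hj (by omega))
  intro t
  induction t with
  | zero =>
    intro D hD
    exact ⟨[], by simp, funext fun j => hD j (by omega)⟩
  | succ t ih =>
    intro D hD
    by_cases hs : N - (t + 1) = N - t
    · exact ih D (fun j hj => hD j (by omega))
    · set s : ℕ := N - (t + 1) with hsdef
      have hsN : s < N := by omega
      set a : ℕ := (E ⟨s, hsN⟩ - D ⟨s, hsN⟩).val with ha
      set D' : Conf N := folds N D (List.replicate a ((s : ℤ) + 1)) with hD'
      have habs : |((s : ℤ) + 1)| = (s : ℤ) + 1 := abs_of_pos (by positivity)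
      have hsign : Int.sign ((s : ℤ) + 1) = 1 := Int.sign_eq_one_of_pos (by positivity)
      have hD'val : ∀ j : Fin N, (j : ℕ) < N - t → D' j = E j := by
        intro j hj
        rw [hD', folds_replicate, habs, hsign]
        by_cases hjs : ((j : ℕ) : ℤ) + 1 < (s : ℤ) + 1
        · simp only [hjs, if_true]
          exact hD j (by omega)
        · have hje : (j : ℕ) = s := by omega
          have hjeq : j = ⟨s, hsN⟩ := Fin.ext hje
          simp only [if_neg hjs]
          rw [hjeq, ha, ZMod.natCast_rightInverse _]
          push_cast
          ring
      obtain ⟨L₁, hL₁, hfold₁⟩ := ih D' hD'val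
      refine ⟨List.replicate a ((s : ℤ) + 1) ++ L₁, ?_, ?_⟩
      · intro k hk
        rcases List.mem_append.1 hk with hk | hk
        · rw [List.eq_of_mem_replicate hk, habs]
          omega
        · exact hL₁ k hk
      · rw [folds_append, ← hD', hfold₁]

lemma iterate_G (N : ℕ) : ∀ (n : ℕ) (C : Conf N) (F : ℕ → ℤ),
    (G N)^[n] (C, F) = (folds N C (List.ofFn fun i : Fin n => F i), fun k => F (k + n)) := by
  intro n
  induction n with
  | zero => intro C F; simp [folds]
  | succ n ih =>
    intro C F
    rw [Function.iterate_succ_apply]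
    show (G N)^[n] (foldMap N (F 0) C, fun k => F (k + 1)) = _
    rw [ih]
    refine Prod.ext ?_ ?_
    · show folds N (foldMap N (F 0) C) (List.ofFn fun i : Fin n => F (↑i + 1)) = _
      have : (List.ofFn fun i : Fin (n + 1) => F i)
          = F 0 :: List.ofFn fun i : Fin n => F (↑i + 1) := by
        rw [List.ofFn_succ]
        simp [Fin.val_succ]
      rw [this]
      rfl
    · funext k
      show F (k + n + 1) = F (k + (n + 1))
      ring_nf

/-- `G` is strongly transitive on `X = 𝔠_N × ⟦−N,N⟧^ℕ`: any point
of `X` can be reached from a point arbitrarily close to any given point of `X`. -/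
theorem G_strongly_transitive (N : ℕ) (hN : 1 ≤ N) :
    ∀ XA XB : Conf N × (ℕ → ℤ), inX N XA → inX N XB → ∀ r > (0 : ℝ),
      ∃ X : Conf N × (ℕ → ℤ), inX N X ∧ distX N X XA ≤ r ∧
        ∃ n : ℕ, (G N)^[n] X = XB := by
  rintro ⟨CA, FA⟩ ⟨CB, FB⟩ ⟨hCA, hFA⟩ ⟨hCB, hFB⟩ r hr
  -- choose m with (1/10)^m ≤ r
  obtain ⟨m, hm⟩ := exists_pow_lt_of_lt_one hr (by norm_num : (1 / 10 : ℝ) < 1)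
  -- the conformation after the first m folds of FA
  set D : Conf N := folds N CA (List.ofFn fun i : Fin m => FA i) with hD
  obtain ⟨L, hLmem, hLfold⟩ := exists_connect N D CB
  set P : List ℤ := (List.ofFn fun i : Fin m => FA i) ++ L with hP
  have hPlen : P.length = m + L.length := by simp [hP]
  have hPmem : ∀ k ∈ P, |k| ≤ (N : ℤ) := by
    intro k hk
    rcases List.mem_append.1 hk with hk | hk
    · obtain ⟨i, hi⟩ := List.mem_ofFn.1 hk
      subst hi
      exact hFA i
    · exact hLmem k hk
  set F : ℕ → ℤ := fun k => if h : k < P.length then P[k] else FB (k - P.length) with hF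
  refine ⟨(CA, F), ⟨hCA, ?_⟩, ?_, m + L.length, ?_⟩
  · -- validSeq
    intro k
    by_cases h : k < P.length
    · simp only [hF, h, dif_pos]
      exact hPmem _ (P.getElem_mem h)
    · simp only [hF, h, dif_neg]
      exact hFB _
  · -- distance bound
    have hdC : dC N CA CA = 0 := by simp [dC, delta]
    have hN0 : (0 : ℝ) < (N : ℝ) := by exact_mod_cast hN
    have hbound : ∀ k : ℕ, |((F k : ℝ)) - ((FA k : ℝ))| / 10 ^ (k + 1)
        ≤ 2 * (N : ℝ) * (1 / 10) ^ (k + 1) := by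
      intro k
      have h1 : |(F k : ℝ)| ≤ (N : ℝ) := by
        have : |F k| ≤ (N : ℤ) := by
          by_cases h : k < P.length
          · simp only [hF, h, dif_pos]; exact hPmem _ (P.getElem_mem h)
          · simp only [hF, h, dif_neg]; exact hFB _
        exact_mod_cast (by exact_mod_cast this : ((|F k| : ℤ) : ℝ) ≤ (N : ℝ))
      have h2 : |(FA k : ℝ)| ≤ (N : ℝ) := by
        have := hFA k
        exact_mod_cast (by exact_mod_cast this : ((|FA k| : ℤ) : ℝ) ≤ (N : ℝ))
      have h3 : |((F k : ℝ)) - ((FA k : ℝ))| ≤ 2 * (N : ℝ) := by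
        calc |((F k : ℝ)) - ((FA k : ℝ))| ≤ |(F k : ℝ)| + |(FA k : ℝ)| := abs_sub _ _
        _ ≤ 2 * (N : ℝ) := by linarith
      rw [div_le_iff₀ (by positivity)]
      calc |((F k : ℝ)) - ((FA k : ℝ))| ≤ 2 * (N : ℝ) := h3
      _ = 2 * (N : ℝ) * (1 / 10) ^ (k + 1) * 10 ^ (k + 1) := by
          rw [one_div, inv_pow, mul_assoc, inv_mul_cancel₀ (by positivity)]; ring
    have hzero : ∀ k : ℕ, k < m → |((F k : ℝ)) - ((FA k : ℝ))| / 10 ^ (k + 1) = 0 := by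
      intro k hk
      have hkP : k < P.length := by omega
      have : F k = FA k := by
        simp only [hF, hkP, dif_pos, hP]
        rw [dif_pos (by simpa [hP] using hkP)]
        rw [List.getElem_append_left (by simp; omega : k < (List.ofFn fun i : Fin m => FA i).length)]
        simp
      rw [this]
      simp
    have hgsum : Summable (fun k : ℕ => 2 * (N : ℝ) * (1 / 10) ^ (k + 1)) := by
      have := (summable_geometric_of_lt_one (by norm_num) (by norm_num : (1/10 : ℝ) < 1))
      exact ((this.mul_left (1 / 10 : ℝ)).mul_left (2 * (N : ℝ))).congr
        (fun k => by ring)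
    have hfsum : Summable (fun k : ℕ => |((F k : ℝ)) - ((FA k : ℝ))| / 10 ^ (k + 1)) :=
      Summable.of_nonneg_of_le (fun k => by positivity) hbound hgsum
    have hsplit := (Summable.sum_add_tsum_nat_add (f := fun k : ℕ =>
        |((F k : ℝ)) - ((FA k : ℝ))| / 10 ^ (k + 1)) m hfsum).symm
    have hsum0 : ∑ i ∈ Finset.range m,
        |((F i : ℝ)) - ((FA i : ℝ))| / 10 ^ (i + 1) = 0 :=
      Finset.sum_eq_zero fun i hi => hzero i (Finset.mem_range.1 hi)
    have htail : (∑' k : ℕ, |((F (k + m) : ℝ)) - ((FA (k + m) : ℝ))| / 10 ^ (k + m + 1))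
        ≤ 2 * (N : ℝ) * (1 / 10) ^ (m + 1) * (10 / 9) := by
      have hgsum2 : Summable (fun k : ℕ => 2 * (N : ℝ) * (1 / 10) ^ (m + 1) * (1 / 10) ^ k) :=
        (summable_geometric_of_lt_one (by norm_num) (by norm_num : (1/10 : ℝ) < 1)).mul_left _
      have hle : ∀ k : ℕ, |((F (k + m) : ℝ)) - ((FA (k + m) : ℝ))| / 10 ^ (k + m + 1)
          ≤ 2 * (N : ℝ) * (1 / 10) ^ (m + 1) * (1 / 10) ^ k := by
        intro k
        calc |((F (k + m) : ℝ)) - ((FA (k + m) : ℝ))| / 10 ^ (k + m + 1)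
            ≤ 2 * (N : ℝ) * (1 / 10) ^ (k + m + 1) := hbound (k + m)
          _ = 2 * (N : ℝ) * (1 / 10) ^ (m + 1) * (1 / 10) ^ k := by ring
      calc (∑' k : ℕ, |((F (k + m) : ℝ)) - ((FA (k + m) : ℝ))| / 10 ^ (k + m + 1))
          ≤ ∑' k : ℕ, 2 * (N : ℝ) * (1 / 10) ^ (m + 1) * (1 / 10) ^ k :=
            Summable.tsum_le_tsum hle (hfsum.comp_injective (add_left_injective m)) hgsum2
        _ = 2 * (N : ℝ) * (1 / 10) ^ (m + 1) * (1 - 1 / 10)⁻¹ := by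
            rw [tsum_mul_left, tsum_geometric_of_lt_one (by norm_num) (by norm_num)]
        _ = 2 * (N : ℝ) * (1 / 10) ^ (m + 1) * (10 / 9) := by norm_num
    have hdF : dF N F FA ≤ (1 / 10 : ℝ) ^ m := by
      rw [dF, hsplit, hsum0, zero_add]
      calc (9 / (2 * (N : ℝ))) * ∑' k : ℕ,
            |((F (k + m) : ℝ)) - ((FA (k + m) : ℝ))| / 10 ^ (k + m + 1)
          ≤ (9 / (2 * (N : ℝ))) * (2 * (N : ℝ) * (1 / 10) ^ (m + 1) * (10 / 9)) := by
            apply mul_le_mul_of_nonneg_left htail (by positivity)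
        _ = (1 / 10 : ℝ) ^ m := by
            field_simp
            ring
    show dC N CA CA + dF N F FA ≤ r
    rw [hdC, zero_add]
    linarith [hdF, le_of_lt hm]
  · -- reaching XB
    rw [iterate_G]
    have hofn : (List.ofFn fun i : Fin (m + L.length) => F i) = P := by
      apply List.ext_getElem
      · simp [hPlen]
      · intro i h1 h2
        rw [List.getElem_ofFn]
        simp only [hF]
        rw [dif_pos (by omega)]
    refine Prod.ext ?_ ?_
    · show folds N CA (List.ofFn fun i : Fin (m + L.length) => F i) = CB
      rw [hofn, hP, folds_append, ← hD, hLfold]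
    · funext k
      show F (k + (m + L.length)) = FB k
      simp only [hF]
      rw [dif_neg (by omega)]
      congr 1
      omega

end HP
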